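/- arXiv:1703.10935 — 4 statements merged into one kernel-verified Lean document; each statement's English description precedes it below -/
import Mathlib

section
/- If X ∼ N(μ, σ²) then the componentwise risk of the pretest estimator m_PT(x,λ) = 1(|x|>λ)x is E[(m_PT(X,λ) − μ)²] = (1 + Φ((−λ−μ)/σ) − Φ((λ−μ)/σ))σ² + (((λ−μ)/σ)φ((λ−μ)/σ) − ((−λ−μ)/σ)φ((−λ−μ)/σ))σ² + (Φ((λ−μ)/σ) − Φ((−λ−μ)/σ))μ². -/
open MeasureTheory ProbabilityTheory
open scoped Real ENNReal NNReal

/-- Standard normal density. -/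
noncomputable def stdGaussPDF (v : ℝ) : ℝ := (Real.sqrt (2 * Real.pi))⁻¹ * Real.exp (-v^2 / 2)

/-- Standard normal cumulative distribution function. -/
noncomputable def stdGaussCDF (t : ℝ) : ℝ := ∫ v in Set.Iic t, stdGaussPDF v

/-- Hard thresholding (pretest) estimating function. -/
noncomputable def hardThresh (x lam : ℝ) : ℝ := if lam < |x| then x else 0

lemma stdGaussPDF_eq_gaussian : stdGaussPDF = gaussianPDFReal 0 1 := by
  ext x
  simp only [stdGaussPDF, gaussianPDFReal, NNReal.coe_one, mul_one, sub_zero]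

lemma continuous_stdGaussPDF : Continuous stdGaussPDF := by
  unfold stdGaussPDF
  fun_prop

lemma integrable_stdGaussPDF : Integrable stdGaussPDF := by
  rw [stdGaussPDF_eq_gaussian]; exact integrable_gaussianPDFReal 0 1

lemma integral_stdGaussPDF : ∫ v, stdGaussPDF v = 1 := by
  rw [stdGaussPDF_eq_gaussian]; exact integral_gaussianPDFReal_eq_one 0 one_ne_zero

lemma integrable_pow_mul_stdGaussPDF (n : ℕ) : Integrable (fun v => v ^ n * stdGaussPDF v) := by
  have h := (integrable_rpow_mul_exp_neg_mul_sq (b := 1/2) (by norm_num) (s := n) (by exact_mod_cast Int.lt_iff_add_one_le.mpr (by positivity))).const_mul ((Real.sqrt (2 * Real.pi))⁻¹)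
  refine h.congr (ae_of_all _ fun v => ?_)
  simp only [Real.rpow_natCast, stdGaussPDF]
  ring_nf

lemma hasDerivAt_stdGaussPDF (v : ℝ) : HasDerivAt stdGaussPDF (-v * stdGaussPDF v) v := by
  have h1 : HasDerivAt (fun v : ℝ => -v^2/2) (-v) v := by
    have := ((hasDerivAt_pow 2 v).neg.div_const 2)
    refine this.congr_deriv ?_
    ring
  have h2 := (h1.exp).const_mul ((Real.sqrt (2 * Real.pi))⁻¹)
  refine h2.congr_deriv ?_
  simp only [stdGaussPDF]
  ring

lemma hasDerivAt_neg_mul_stdGaussPDF (v : ℝ) :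
    HasDerivAt (fun v => -(v * stdGaussPDF v)) (v^2 * stdGaussPDF v - stdGaussPDF v) v := by
  have h := ((hasDerivAt_id v).mul (hasDerivAt_stdGaussPDF v)).neg
  refine h.congr_deriv ?_
  simp only [id_eq]
  ring

lemma integral_sq_mul_stdGaussPDF : ∫ v, v^2 * stdGaussPDF v = 1 := by
  have h0 : ∫ v, (v^2 * stdGaussPDF v - stdGaussPDF v) = 0 := by
    refine integral_eq_zero_of_hasDerivAt_of_integrable hasDerivAt_neg_mul_stdGaussPDF
      ((integrable_pow_mul_stdGaussPDF 2).sub integrable_stdGaussPDF) ?_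
    have := (integrable_pow_mul_stdGaussPDF 1).neg
    refine this.congr (ae_of_all _ fun v => by simp)
  rw [integral_sub (integrable_pow_mul_stdGaussPDF 2) integrable_stdGaussPDF,
    integral_stdGaussPDF] at h0
  linarith


lemma stdGaussCDF_sub (a b : ℝ) :
    stdGaussCDF b - stdGaussCDF a = ∫ v in a..b, stdGaussPDF v := by
  exact intervalIntegral.integral_Iic_sub_Iic integrable_stdGaussPDF.integrableOn
    integrable_stdGaussPDF.integrableOn

lemma intervalIntegral_sq_mul_stdGaussPDF (a b : ℝ) :
    ∫ v in a..b, v^2 * stdGaussPDF v =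
      (stdGaussCDF b - stdGaussCDF a) + (a * stdGaussPDF a - b * stdGaussPDF b) := by
  have hcont : Continuous fun v : ℝ => v^2 * stdGaussPDF v - stdGaussPDF v := by
    exact ((continuous_pow 2).mul continuous_stdGaussPDF).sub continuous_stdGaussPDF
  have hftc := intervalIntegral.integral_eq_sub_of_hasDerivAt
    (f := fun v => -(v * stdGaussPDF v))
    (fun x _ => hasDerivAt_neg_mul_stdGaussPDF x) (hcont.intervalIntegrable a b)
  have hsplit : ∫ v in a..b, (v^2 * stdGaussPDF v - stdGaussPDF v) =
      (∫ v in a..b, v^2 * stdGaussPDF v) - ∫ v in a..b, stdGaussPDF v := by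
    exact intervalIntegral.integral_sub
      (((continuous_pow 2).mul continuous_stdGaussPDF).intervalIntegrable a b)
      (continuous_stdGaussPDF.intervalIntegrable a b)
  rw [hsplit] at hftc
  rw [← stdGaussCDF_sub] at hftc
  linarith


/-- Componentwise risk of the pretest estimator under `X ∼ N(μ, σ²)`. -/
theorem pretest_componentwise_risk (μ σ lam : ℝ) (hσ : 0 < σ) (hlam : 0 ≤ lam) :
    ∫ x, (hardThresh x lam - μ)^2 ∂(gaussianReal μ ⟨σ^2, sq_nonneg σ⟩) =
      (1 + stdGaussCDF ((-lam - μ) / σ) - stdGaussCDF ((lam - μ) / σ)) * σ^2 +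
      (((lam - μ) / σ) * stdGaussPDF ((lam - μ) / σ) -
        ((-lam - μ) / σ) * stdGaussPDF ((-lam - μ) / σ)) * σ^2 +
      (stdGaussCDF ((lam - μ) / σ) - stdGaussCDF ((-lam - μ) / σ)) * μ^2 := by
  have hσ' : σ ≠ 0 := ne_of_gt hσ
  set a := (-lam - μ) / σ with ha
  set b := (lam - μ) / σ with hb
  have hab : a ≤ b := by
    rw [ha, hb]
    gcongr
    linarith
  set V : ℝ≥0 := ⟨σ^2, sq_nonneg σ⟩ with hV
  have hVne : V ≠ 0 := by
    intro h
    have h := congrArg NNReal.toReal h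
    exact pow_ne_zero 2 hσ' h
  set F : ℝ → ℝ := fun x => gaussianPDFReal μ V x * (hardThresh x lam - μ)^2 with hF
  -- Step 1: express the integral against the Gaussian measure as a Lebesgue integral
  have step1 : ∫ x, (hardThresh x lam - μ)^2 ∂(gaussianReal μ V) = ∫ x, F x := by
    rw [gaussianReal_of_var_ne_zero _ hVne]
    have : gaussianPDF μ V = fun x => ((gaussianPDFReal μ V x).toNNReal : ℝ≥0∞) := rfl
    rw [this, integral_withDensity_eq_integral_smul
      ((measurable_gaussianPDFReal μ V).real_toNNReal) _]
    refine integral_congr_ae (ae_of_all _ fun x => ?_)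
    simp only [NNReal.smul_def, Real.coe_toNNReal _ (gaussianPDFReal_nonneg μ V x),
      smul_eq_mul, hF]
  -- pdf composed with the affine substitution
  have hpdf_comp : ∀ u : ℝ, gaussianPDFReal μ V (σ * u + μ) = σ⁻¹ * stdGaussPDF u := by
    intro u
    simp only [gaussianPDFReal, stdGaussPDF, hV, NNReal.coe_mk]
    change (√(2 * π * σ^2))⁻¹ * rexp (-(σ * u + μ - μ) ^ 2 / (2 * σ^2)) = _
    rw [Real.sqrt_mul (by positivity) (σ^2), Real.sqrt_sq hσ.le]
    rw [show σ * u + μ - μ = σ * u by ring]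
    rw [show -(σ * u)^2 / (2 * σ^2) = -u^2/2 by field_simp]
    rw [mul_inv]
    ring
  -- Step 2: change of variables x = σ u + μ
  have step2 : ∫ x, F x = ∫ u, stdGaussPDF u * (hardThresh (σ * u + μ) lam - μ)^2 := by
    have h1 : ∫ u, F (σ * u + μ) = |σ⁻¹| • ∫ y, F (y + μ) :=
      MeasureTheory.Measure.integral_comp_mul_left (fun y => F (y + μ)) σ
    rw [integral_add_right_eq_self (μ := volume) F μ] at h1
    have h2 : ∫ u, F (σ * u + μ) = σ⁻¹ * ∫ x, F x := by
      rw [h1, abs_of_pos (by positivity), smul_eq_mul]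
    have h3 : ∫ x, F x = σ * ∫ u, F (σ * u + μ) := by
      rw [h2, ← mul_assoc, mul_inv_cancel₀ hσ', one_mul]
    rw [h3]
    rw [show (∫ u, F (σ * u + μ)) = ∫ u, σ⁻¹ * (stdGaussPDF u * (hardThresh (σ * u + μ) lam - μ)^2) from
      integral_congr_ae (ae_of_all _ fun u => by rw [hF]; simp only; rw [hpdf_comp u]; ring)]
    rw [integral_const_mul, ← mul_assoc, mul_inv_cancel₀ hσ', one_mul]
  -- pointwise decomposition of the integrand
  have hpt : ∀ u : ℝ, stdGaussPDF u * (hardThresh (σ * u + μ) lam - μ)^2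
      = σ^2 * (u^2 * stdGaussPDF u)
        + Set.indicator (Set.Icc a b) (fun u => (μ^2 - σ^2 * u^2) * stdGaussPDF u) u := by
    intro u
    have hmem : u ∈ Set.Icc a b ↔ ¬ lam < |σ * u + μ| := by
      rw [not_lt, abs_le, Set.mem_Icc, ha, hb, div_le_iff₀ hσ, le_div_iff₀ hσ]
      constructor <;> rintro ⟨h1, h2⟩ <;> constructor <;> nlinarith [mul_comm u σ]
    by_cases h : lam < |σ * u + μ|
    · rw [Set.indicator_of_notMem (fun hm => (hmem.mp hm) h)]
      rw [hardThresh, if_pos h]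
      ring
    · rw [Set.indicator_of_mem (hmem.mpr h)]
      rw [hardThresh, if_neg h]
      ring
  -- integrability facts
  have hI1 : Integrable (fun u : ℝ => σ^2 * (u^2 * stdGaussPDF u)) :=
    (integrable_pow_mul_stdGaussPDF 2).const_mul _
  have hI0 : Integrable (fun u : ℝ => (μ^2 - σ^2 * u^2) * stdGaussPDF u) := by
    have := (integrable_stdGaussPDF.const_mul (μ^2)).sub
      ((integrable_pow_mul_stdGaussPDF 2).const_mul (σ^2))
    exact this.congr (ae_of_all _ fun u => by simp only [Pi.sub_apply]; ring)
  have hI2 : Integrable (Set.indicator (Set.Icc a b)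
      (fun u => (μ^2 - σ^2 * u^2) * stdGaussPDF u)) :=
    hI0.indicator measurableSet_Icc
  -- Step 3: split the integral
  have step3 : ∫ u, stdGaussPDF u * (hardThresh (σ * u + μ) lam - μ)^2
      = σ^2 + ∫ u in a..b, (μ^2 - σ^2 * u^2) * stdGaussPDF u := by
    rw [show (fun u => stdGaussPDF u * (hardThresh (σ * u + μ) lam - μ)^2)
        = fun u => σ^2 * (u^2 * stdGaussPDF u)
          + Set.indicator (Set.Icc a b) (fun u => (μ^2 - σ^2 * u^2) * stdGaussPDF u) u from
      funext hpt]
    rw [integral_add hI1 hI2, integral_const_mul, integral_sq_mul_stdGaussPDF, mul_one]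
    rw [integral_indicator measurableSet_Icc, integral_Icc_eq_integral_Ioc,
      ← intervalIntegral.integral_of_le hab]
  -- Step 4: evaluate the interval integral
  have step4 : ∫ u in a..b, (μ^2 - σ^2 * u^2) * stdGaussPDF u
      = μ^2 * (stdGaussCDF b - stdGaussCDF a)
        - σ^2 * ((stdGaussCDF b - stdGaussCDF a) + (a * stdGaussPDF a - b * stdGaussPDF b)) := by
    have hsub : ∫ u in a..b, (μ^2 - σ^2 * u^2) * stdGaussPDF u
        = (∫ u in a..b, μ^2 * stdGaussPDF u) - ∫ u in a..b, σ^2 * (u^2 * stdGaussPDF u) := by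
      rw [← intervalIntegral.integral_sub (f := fun u => μ^2 * stdGaussPDF u)
        (g := fun u => σ^2 * (u^2 * stdGaussPDF u))
        ((continuous_const.mul continuous_stdGaussPDF).intervalIntegrable a b)
        ((continuous_const.mul ((continuous_pow 2).mul continuous_stdGaussPDF)).intervalIntegrable a b)]
      refine intervalIntegral.integral_congr fun u _ => by ring
    rw [hsub, intervalIntegral.integral_const_mul, intervalIntegral.integral_const_mul,
      ← stdGaussCDF_sub, intervalIntegral_sq_mul_stdGaussPDF]
  rw [step1, step2, step3, step4]
  ring
end

section
/- If X ∼ N(μ, σ²) then the componentwise risk of the lasso (soft-threshold) estimator satisfies E[(m_L(X,λ) − μ)²] = E[(m_PT(X,λ) − μ)²] + λ² P(|X| > λ) − 2λσ(φ((−λ−μ)/σ) + φ((λ−μ)/σ)), where m_PT is the hard-threshold estimator. -/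
open MeasureTheory ProbabilityTheory

/-- Soft thresholding (lasso) estimating function. -/
noncomputable def softThresh (x lam : ℝ) : ℝ :=
  if x < -lam then x + lam else if lam < x then x - lam else 0

section LassoAux

open Real Filter Set

noncomputable def gpdf (μ σ : ℝ) (x : ℝ) : ℝ :=
  (Real.sqrt (2 * Real.pi * σ^2))⁻¹ * Real.exp (-(x - μ)^2 / (2 * σ^2))

lemma gpdf_eq (μ σ : ℝ) : gaussianPDFReal μ ⟨σ^2, sq_nonneg σ⟩ = gpdf μ σ := rfl

lemma gpdf_nonneg (μ σ : ℝ) (x : ℝ) : 0 ≤ gpdf μ σ x := by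
  unfold gpdf; positivity

lemma measurable_gpdf (μ σ : ℝ) : Measurable (gpdf μ σ) := by
  rw [← gpdf_eq]; exact measurable_gaussianPDFReal _ _

lemma integrable_gpdf (μ σ : ℝ) : Integrable (gpdf μ σ) := by
  rw [← gpdf_eq]; exact integrable_gaussianPDFReal _ _

lemma integrable_sq_mul_gpdf (μ : ℝ) {σ : ℝ} (hσ : 0 < σ) :
    Integrable (fun x => x^2 * gpdf μ σ x) := by
  set c : ℝ := (Real.sqrt (2 * Real.pi * σ^2))⁻¹ with hc
  set b : ℝ := (2*σ^2)⁻¹ with hb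
  have hbpos : 0 < b := by positivity
  have h2 : Integrable (fun y : ℝ => y^2 * Real.exp (-b * y^2)) := by
    have h := integrable_rpow_mul_exp_neg_mul_sq hbpos (s := 2) (by norm_num)
    refine h.congr ?_
    filter_upwards with y
    rw [← Real.rpow_natCast y 2]; norm_num
  have h1 : Integrable (fun y : ℝ => y * Real.exp (-b * y^2)) :=
    integrable_mul_exp_neg_mul_sq hbpos
  have h0 : Integrable (fun y : ℝ => Real.exp (-b * y^2)) :=
    integrable_exp_neg_mul_sq hbpos
  have key : Integrable (fun y : ℝ => (y + μ)^2 * gpdf μ σ (y + μ)) := by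
    have e : (fun y : ℝ => (y + μ)^2 * gpdf μ σ (y + μ))
        = fun y => c * (y^2 * Real.exp (-b * y^2)) + ((2*μ*c) * (y * Real.exp (-b * y^2))
            + (μ^2*c) * Real.exp (-b * y^2)) := by
      funext y
      have hy : y + μ - μ = y := by ring
      have hexp : -(y)^2 / (2*σ^2) = -b * y^2 := by
        rw [hb]; field_simp
      rw [gpdf, hy, hexp]; ring
    rw [e]
    exact ((h2.const_mul c).add ((h1.const_mul _).add (h0.const_mul _)))
  have emb := (MeasurableEquiv.addRight μ).measurableEmbedding
  exact ((measurePreserving_add_right volume μ).integrable_comp_emb emb).mp key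

lemma var_ne_zero {σ : ℝ} (hσ : 0 < σ) : (⟨σ^2, sq_nonneg σ⟩ : NNReal) ≠ 0 := by
  intro h
  have := congrArg NNReal.toReal h
  change σ^2 = 0 at this
  exact (pow_ne_zero 2 hσ.ne') this

lemma integrable_gpdf_mul (μ : ℝ) {σ : ℝ} (hσ : 0 < σ) {F : ℝ → ℝ} (hF : Measurable F)
    {A B : ℝ} (hbound : ∀ x, |F x| ≤ A + B * x^2) :
    Integrable (fun x => gpdf μ σ x * F x) := by
  refine Integrable.mono (((integrable_gpdf μ σ).const_mul A).add
    ((integrable_sq_mul_gpdf μ hσ).const_mul B)) ((measurable_gpdf μ σ).mul hF).aestronglyMeasurable ?_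
  filter_upwards with x
  have h0 := gpdf_nonneg μ σ x
  have h1 := hbound x
  have h2 := abs_nonneg (F x)
  rw [Real.norm_eq_abs, Real.norm_eq_abs, abs_mul, abs_of_nonneg h0]
  calc gpdf μ σ x * |F x| ≤ gpdf μ σ x * (A + B * x^2) := by
        exact mul_le_mul_of_nonneg_left h1 h0
    _ ≤ |A * gpdf μ σ x + B * (x^2 * gpdf μ σ x)| := by
        rw [show A * gpdf μ σ x + B * (x^2 * gpdf μ σ x) = gpdf μ σ x * (A + B * x^2) by ring]
        exact le_abs_self _

lemma integrable_gauss (μ : ℝ) {σ : ℝ} (hσ : 0 < σ) {F : ℝ → ℝ} (hF : Measurable F)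
    {A B : ℝ} (hbound : ∀ x, |F x| ≤ A + B * x^2) :
    Integrable F (gaussianReal μ ⟨σ^2, sq_nonneg σ⟩) := by
  rw [gaussianReal_of_var_ne_zero μ (var_ne_zero hσ)]
  have hd : gaussianPDF μ ⟨σ^2, sq_nonneg σ⟩
      = fun x => ((Real.toNNReal (gaussianPDFReal μ (⟨σ^2, sq_nonneg σ⟩ : NNReal) x) : NNReal) : ENNReal) := rfl
  erw [hd, integrable_withDensity_iff_integrable_smul
    ((measurable_gaussianPDFReal μ _).real_toNNReal)]
  refine (integrable_gpdf_mul μ hσ hF hbound).congr ?_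
  filter_upwards with x
  erw [NNReal.smul_def, smul_eq_mul,
    Real.coe_toNNReal _ (gaussianPDFReal_nonneg μ _ x), gpdf_eq]

lemma integral_gauss_eq (μ : ℝ) {σ : ℝ} (hσ : 0 < σ) (F : ℝ → ℝ) :
    ∫ x, F x ∂(gaussianReal μ ⟨σ^2, sq_nonneg σ⟩) = ∫ x, gpdf μ σ x * F x := by
  rw [gaussianReal_of_var_ne_zero μ (var_ne_zero hσ)]
  have hd : gaussianPDF μ ⟨σ^2, sq_nonneg σ⟩
      = fun x => ((Real.toNNReal (gaussianPDFReal μ (⟨σ^2, sq_nonneg σ⟩ : NNReal) x) : NNReal) : ENNReal) := rfl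
  erw [hd, integral_withDensity_eq_integral_smul
    ((measurable_gaussianPDFReal μ _).real_toNNReal) F]
  congr 1
  funext x
  erw [NNReal.smul_def, smul_eq_mul,
    Real.coe_toNNReal _ (gaussianPDFReal_nonneg μ _ x), gpdf_eq]

lemma hasDerivAt_gaussF (μ : ℝ) {σ : ℝ} (hσ : 0 < σ) (x : ℝ) :
    HasDerivAt (fun x : ℝ => (-(σ^2) * (Real.sqrt (2 * Real.pi * σ^2))⁻¹)
        * Real.exp (-(x - μ)^2 / (2*σ^2))) ((x - μ) * gpdf μ σ x) x := by
  have h1 : HasDerivAt (fun x : ℝ => -(x-μ)^2/(2*σ^2)) (-(x-μ)/σ^2) x := by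
    have hd : HasDerivAt (fun x : ℝ => x - μ) 1 x := (hasDerivAt_id x).sub_const μ
    have h2 := ((hd.pow 2).neg).div_const (2*σ^2)
    refine h2.congr_deriv ?_
    field_simp
    ring
  have h4 := (h1.exp).const_mul (-(σ^2) * (Real.sqrt (2 * Real.pi * σ^2))⁻¹)
  refine h4.congr_deriv ?_
  rw [gpdf]
  field_simp

lemma integrableOn_lin_gpdf (μ : ℝ) {σ : ℝ} (hσ : 0 < σ) (s : Set ℝ) :
    IntegrableOn (fun x => (x - μ) * gpdf μ σ x) s := by
  refine Integrable.integrableOn ?_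
  have h : Integrable (fun x => gpdf μ σ x * (x - μ)) := by
    refine integrable_gpdf_mul μ hσ (measurable_id.sub_const μ) (A := 1 + |μ|) (B := 1) ?_
    intro x
    have h1 : |x - μ| ≤ |x| + |μ| := abs_sub _ _
    nlinarith [sq_nonneg (|x| - 1), sq_abs x, abs_nonneg x]
  exact h.congr (by filter_upwards with x; ring)

lemma tendsto_gaussF_top (μ : ℝ) {σ : ℝ} (hσ : 0 < σ) :
    Tendsto (fun x : ℝ => (-(σ^2) * (Real.sqrt (2 * Real.pi * σ^2))⁻¹)
        * Real.exp (-(x - μ)^2 / (2*σ^2))) atTop (nhds 0) := by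
  have ha : Tendsto (fun x : ℝ => x - μ) atTop atTop :=
    tendsto_atTop_add_const_right _ _ tendsto_id
  have hb : Tendsto (fun x : ℝ => (x - μ)^2) atTop atTop := by
    have := ha.atTop_mul_atTop₀ ha
    refine this.congr fun x => by ring
  have hc : Tendsto (fun x : ℝ => (x - μ)^2 / (2*σ^2)) atTop atTop :=
    hb.atTop_div_const (by positivity)
  have hd : Tendsto (fun x : ℝ => -(x - μ)^2 / (2*σ^2)) atTop atBot := by
    simp only [neg_div]
    exact tendsto_neg_atTop_atBot.comp hc
  have := (Real.tendsto_exp_atBot.comp hd).const_mul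
    (-(σ^2) * (Real.sqrt (2 * Real.pi * σ^2))⁻¹)
  simpa using this

lemma tendsto_gaussF_bot (μ : ℝ) {σ : ℝ} (hσ : 0 < σ) :
    Tendsto (fun x : ℝ => (-(σ^2) * (Real.sqrt (2 * Real.pi * σ^2))⁻¹)
        * Real.exp (-(x - μ)^2 / (2*σ^2))) atBot (nhds 0) := by
  have ha : Tendsto (fun x : ℝ => x - μ) atBot atBot :=
    tendsto_atBot_add_const_right _ _ tendsto_id
  have hb : Tendsto (fun x : ℝ => (x - μ)^2) atBot atTop := by
    have := ha.atBot_mul_atBot₀ ha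
    refine this.congr fun x => by ring
  have hc : Tendsto (fun x : ℝ => (x - μ)^2 / (2*σ^2)) atBot atTop :=
    hb.atTop_div_const (by positivity)
  have hd : Tendsto (fun x : ℝ => -(x - μ)^2 / (2*σ^2)) atBot atBot := by
    simp only [neg_div]
    exact tendsto_neg_atTop_atBot.comp hc
  have := (Real.tendsto_exp_atBot.comp hd).const_mul
    (-(σ^2) * (Real.sqrt (2 * Real.pi * σ^2))⁻¹)
  simpa using this

lemma integral_Ioi_gauss (μ : ℝ) {σ : ℝ} (hσ : 0 < σ) (a : ℝ) :
    ∫ x in Ioi a, (x - μ) * gpdf μ σ x = σ^2 * gpdf μ σ a := by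
  have h := integral_Ioi_of_hasDerivAt_of_tendsto
    (f := fun x : ℝ => (-(σ^2) * (Real.sqrt (2 * Real.pi * σ^2))⁻¹)
        * Real.exp (-(x - μ)^2 / (2*σ^2)))
    (hasDerivAt_gaussF μ hσ a).continuousAt.continuousWithinAt
    (fun x _ => hasDerivAt_gaussF μ hσ x)
    (integrableOn_lin_gpdf μ hσ _) (tendsto_gaussF_top μ hσ)
  rw [h, gpdf]
  ring

lemma gpdf_neg (μ σ : ℝ) (x : ℝ) : gpdf μ σ (-x) = gpdf (-μ) σ x := by
  rw [gpdf, gpdf, show (-x - μ)^2 = (x - -μ)^2 by ring]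

lemma integral_Iio_gauss (μ : ℝ) {σ : ℝ} (hσ : 0 < σ) (a : ℝ) :
    ∫ x in Iio a, (x - μ) * gpdf μ σ x = -(σ^2) * gpdf μ σ a := by
  have h := integral_comp_neg_Ioi (-a) (fun x => (x - μ) * gpdf μ σ x)
  rw [neg_neg] at h
  rw [integral_Iic_eq_integral_Iio] at h
  rw [← h]
  have e : ∀ x : ℝ, (-x - μ) * gpdf μ σ (-x) = -((x - (-μ)) * gpdf (-μ) σ x) := by
    intro x
    rw [gpdf_neg]
    ring
  simp_rw [e]
  rw [integral_neg, integral_Ioi_gauss (-μ) hσ (-a), ← gpdf_neg, neg_neg]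
  ring

lemma gpdf_scale (μ : ℝ) {σ : ℝ} (hσ : 0 < σ) (t : ℝ) :
    σ^2 * gpdf μ σ t = σ * stdGaussPDF ((t - μ)/σ) := by
  rw [gpdf, stdGaussPDF]
  rw [Real.sqrt_mul (by positivity : (0:ℝ) ≤ 2 * Real.pi) (σ^2), Real.sqrt_sq hσ.le]
  rw [show -((t - μ)/σ)^2/2 = -(t-μ)^2/(2*σ^2) by rw [div_pow]; ring]
  have h1 : Real.sqrt (2 * Real.pi) > 0 := by positivity
  field_simp

end LassoAux

/-- If `X ∼ N(μ, σ²)` then the componentwise risk of the lasso (soft-threshold) estimator equals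
the risk of the pretest (hard-threshold) estimator plus
`λ² P(|X| > λ) − 2λσ(φ((−λ−μ)/σ) + φ((λ−μ)/σ))`. -/
theorem lasso_risk_eq_pretest_risk (μ σ lam : ℝ) (hσ : 0 < σ) (hlam : 0 ≤ lam) :
    ∫ x, (softThresh x lam - μ)^2 ∂(gaussianReal μ ⟨σ^2, sq_nonneg σ⟩) =
      (∫ x, (hardThresh x lam - μ)^2 ∂(gaussianReal μ ⟨σ^2, sq_nonneg σ⟩)) +
      lam^2 * ((gaussianReal μ ⟨σ^2, sq_nonneg σ⟩) {x : ℝ | lam < |x|}).toReal -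
      2 * lam * σ * (stdGaussPDF ((-lam - μ) / σ) + stdGaussPDF ((lam - μ) / σ)) := by
  classical
  set γ := gaussianReal μ (⟨σ^2, sq_nonneg σ⟩ : NNReal) with hγ
  have hs1 : MeasurableSet {y : ℝ | lam < |y|} := measurableSet_lt measurable_const measurable_abs
  have hs2 : MeasurableSet {y : ℝ | y < -lam} := measurableSet_lt measurable_id measurable_const
  have hs3 : MeasurableSet {y : ℝ | lam < y} := measurableSet_lt measurable_const measurable_id
  have hdecomp : ∀ x : ℝ, (softThresh x lam - μ)^2 = (hardThresh x lam - μ)^2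
      + (Set.indicator {y : ℝ | lam < |y|} (fun _ => lam^2) x
        + (2*lam) * (Set.indicator {y : ℝ | y < -lam} (fun y => y - μ) x)
        - (2*lam) * (Set.indicator {y : ℝ | lam < y} (fun y => y - μ) x)) := by
    intro x
    simp only [softThresh, hardThresh, Set.indicator_apply, Set.mem_setOf_eq]
    by_cases h1 : x < -lam
    · have hx : lam < |x| := lt_of_lt_of_le (by linarith) (neg_le_abs x)
      have h2 : ¬ lam < x := by linarith
      simp only [h1, hx, h2, if_true, if_false]
      ring
    · by_cases h2 : lam < x
      · have hx : lam < |x| := lt_of_lt_of_le h2 (le_abs_self x)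
        simp only [h1, h2, hx, if_true, if_false]
        ring
      · have hx : ¬ lam < |x| := not_lt.mpr (abs_le.mpr ⟨by linarith, by linarith⟩)
        simp only [h1, h2, hx, if_true, if_false]
        ring
  have Ig : Integrable (fun x => (hardThresh x lam - μ)^2) γ := by
    refine integrable_gauss μ hσ ?_ (A := 2*μ^2) (B := 2) ?_
    · exact ((Measurable.ite (measurableSet_lt measurable_const measurable_abs)
        measurable_id measurable_const).sub_const μ).pow_const 2
    · intro x
      rw [abs_of_nonneg (sq_nonneg _)]
      unfold hardThresh
      split_ifs <;> nlinarith [sq_nonneg (x + μ), sq_nonneg (x - μ), sq_nonneg μ, sq_nonneg x]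
  have I1 : Integrable (Set.indicator {y : ℝ | lam < |y|} (fun _ => lam^2)) γ := by
    refine integrable_gauss μ hσ (measurable_const.indicator hs1) (A := lam^2) (B := 0) ?_
    intro x
    rw [Set.indicator_apply]
    split_ifs
    · rw [abs_of_nonneg (sq_nonneg lam)]; nlinarith [sq_nonneg x]
    · simp; positivity
  have hbound23 : ∀ (s : Set ℝ) (x : ℝ),
      |Set.indicator s (fun y => y - μ) x| ≤ (1 + |μ|) + 1 * x^2 := by
    intro s x
    rw [Set.indicator_apply]
    have key : |x - μ| ≤ (1 + |μ|) + 1 * x^2 := by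
      have h1 : |x - μ| ≤ |x| + |μ| := abs_sub x μ
      nlinarith [sq_nonneg (|x| - 1), sq_abs x, abs_nonneg x]
    split_ifs
    · exact key
    · simp only [abs_zero]; positivity
  have I2 : Integrable (Set.indicator {y : ℝ | y < -lam} (fun y => y - μ)) γ :=
    integrable_gauss μ hσ ((measurable_id.sub_const μ).indicator hs2) (hbound23 _)
  have I3 : Integrable (Set.indicator {y : ℝ | lam < y} (fun y => y - μ)) γ :=
    integrable_gauss μ hσ ((measurable_id.sub_const μ).indicator hs3) (hbound23 _)
  have hint2 : Integrable (fun a : ℝ =>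
      2*lam * Set.indicator {y : ℝ | y < -lam} (fun y => y - μ) a) γ := I2.const_mul (2*lam)
  have hint3 : Integrable (fun a : ℝ =>
      2*lam * Set.indicator {y : ℝ | lam < y} (fun y => y - μ) a) γ := I3.const_mul (2*lam)
  have hint1 : Integrable (fun a : ℝ =>
      Set.indicator {y : ℝ | lam < |y|} (fun _ => lam^2) a
        + 2*lam * Set.indicator {y : ℝ | y < -lam} (fun y => y - μ) a) γ := I1.add hint2
  have hint : Integrable (fun a : ℝ =>
      Set.indicator {y : ℝ | lam < |y|} (fun _ => lam^2) a
        + 2*lam * Set.indicator {y : ℝ | y < -lam} (fun y => y - μ) a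
        - 2*lam * Set.indicator {y : ℝ | lam < y} (fun y => y - μ) a) γ := hint1.sub hint3
  rw [integral_congr_ae (ae_of_all γ hdecomp)]
  rw [integral_add Ig hint, integral_sub hint1 hint3,
      integral_add I1 hint2, integral_const_mul, integral_const_mul]
  have e1 : ∫ x, Set.indicator {y : ℝ | lam < |y|} (fun _ => lam^2) x ∂γ
      = lam^2 * (γ {x : ℝ | lam < |x|}).toReal := by
    rw [integral_indicator_const _ hs1, smul_eq_mul, measureReal_def]
    ring
  have e2 : ∫ x, Set.indicator {y : ℝ | y < -lam} (fun y => y - μ) x ∂γ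
      = -(σ * stdGaussPDF ((-lam - μ)/σ)) := by
    rw [hγ, integral_gauss_eq μ hσ]
    have hind : (fun x => gpdf μ σ x * Set.indicator {y : ℝ | y < -lam} (fun y => y - μ) x)
        = Set.indicator {y : ℝ | y < -lam} (fun x => (x - μ) * gpdf μ σ x) := by
      funext x
      rw [Set.indicator_apply, Set.indicator_apply]
      split_ifs <;> ring
    rw [hind, integral_indicator hs2,
      show {y : ℝ | y < -lam} = Set.Iio (-lam) from rfl, integral_Iio_gauss μ hσ,
      show -(σ^2) * gpdf μ σ (-lam) = -(σ^2 * gpdf μ σ (-lam)) by ring, gpdf_scale μ hσ,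
      show (-lam - μ) = (-lam - μ) from rfl]
  have e3 : ∫ x, Set.indicator {y : ℝ | lam < y} (fun y => y - μ) x ∂γ
      = σ * stdGaussPDF ((lam - μ)/σ) := by
    rw [hγ, integral_gauss_eq μ hσ]
    have hind : (fun x => gpdf μ σ x * Set.indicator {y : ℝ | lam < y} (fun y => y - μ) x)
        = Set.indicator {y : ℝ | lam < y} (fun x => (x - μ) * gpdf μ σ x) := by
      funext x
      rw [Set.indicator_apply, Set.indicator_apply]
      split_ifs <;> ring
    rw [hind, integral_indicator hs3,
      show {y : ℝ | lam < y} = Set.Ioi lam from rfl, integral_Ioi_gauss μ hσ,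
      gpdf_scale μ hσ]
  rw [e1, e2, e3]
  ring
end

section
/- In the spike and normal model, the integrated risk of ridge is R(λ) = σ²/(1+λ)² + (1−p)(μ₀² + σ₀²) λ²/(1+λ)², and it is minimized over λ ∈ [0,∞] at λ* = σ²/((1−p)(μ₀² + σ₀²)), provided (1−p)(μ₀²+σ₀²) > 0. -/
open MeasureTheory ProbabilityTheory Real Filter
open scoped NNReal ENNReal

namespace SpikeHelpers


lemma my_int_mul_exp {b : ℝ} (hb : 0 < b) : ∫ x : ℝ, x * rexp (-b * x ^ 2) = 0 := by
  have hderiv : ∀ x : ℝ, HasDerivAt (fun x : ℝ => -(2 * b)⁻¹ * rexp (-b * x ^ 2))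
      (x * rexp (-b * x ^ 2)) x := by
    intro x
    refine ((((hasDerivAt_pow 2 x).const_mul (-b)).exp).const_mul (-(2 * b)⁻¹)).congr_deriv ?_
    field_simp
    ring
  have h := integral_eq_zero_of_hasDerivAt_of_integrable hderiv
    (integrable_mul_exp_neg_mul_sq hb)
    ((integrable_exp_neg_mul_sq hb).const_mul (-(2 * b)⁻¹))
  simpa using h

lemma my_integrable_sq_exp {b : ℝ} (hb : 0 < b) :
    Integrable (fun x : ℝ => x ^ 2 * rexp (-b * x ^ 2)) := by
  have h := integrable_rpow_mul_exp_neg_mul_sq hb (s := 2) (by norm_num)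
  have : (fun x : ℝ => x ^ (2 : ℝ) * rexp (-b * x ^ 2)) =
      fun x : ℝ => x ^ 2 * rexp (-b * x ^ 2) := by
    funext x
    rw [show (2:ℝ) = ((2:ℕ):ℝ) by norm_num, Real.rpow_natCast]
  rwa [this] at h

lemma my_int_sq_exp {b : ℝ} (hb : 0 < b) :
    ∫ x : ℝ, x ^ 2 * rexp (-b * x ^ 2) = (2 * b)⁻¹ * Real.sqrt (π / b) := by
  have hderiv : ∀ x : ℝ, HasDerivAt (fun x : ℝ => x * rexp (-b * x ^ 2))
      (rexp (-b * x ^ 2) - 2 * b * (x ^ 2 * rexp (-b * x ^ 2))) x := by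
    intro x
    refine ((hasDerivAt_id x).mul (((hasDerivAt_pow 2 x).const_mul (-b)).exp)).congr_deriv ?_
    simp
    ring
  have hint : Integrable (fun x : ℝ =>
      rexp (-b * x ^ 2) - 2 * b * (x ^ 2 * rexp (-b * x ^ 2))) :=
    (integrable_exp_neg_mul_sq hb).sub ((my_integrable_sq_exp hb).const_mul _)
  have h := integral_eq_zero_of_hasDerivAt_of_integrable hderiv hint
    (integrable_mul_exp_neg_mul_sq hb)
  rw [integral_sub (integrable_exp_neg_mul_sq hb) ((my_integrable_sq_exp hb).const_mul _),
    integral_const_mul, integral_gaussian, sub_eq_zero] at h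
  field_simp at h ⊢
  linarith

lemma my_gauss_withDensity (μ : ℝ) {v : ℝ≥0} (hv : v ≠ 0) :
    gaussianReal μ v =
      (volume : Measure ℝ).withDensity
        (fun x => ((gaussianPDFReal μ v x).toNNReal : ℝ≥0∞)) := by
  rw [gaussianReal_of_var_ne_zero _ hv, gaussianPDF_def]
  rfl

lemma my_gauss_integral (μ : ℝ) {v : ℝ≥0} (hv : v ≠ 0) (g : ℝ → ℝ) :
    ∫ x, g x ∂(gaussianReal μ v) = ∫ x, gaussianPDFReal μ v x * g x := by
  rw [my_gauss_withDensity μ hv,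
    integral_withDensity_eq_integral_smul
      ((measurable_gaussianPDFReal μ v).real_toNNReal) g]
  congr 1
  funext x
  rw [NNReal.smul_def, Real.coe_toNNReal _ (gaussianPDFReal_nonneg μ v x), smul_eq_mul]

lemma my_gauss_integrable (μ : ℝ) {v : ℝ≥0} (hv : v ≠ 0) {g : ℝ → ℝ}
    (h : Integrable (fun x => gaussianPDFReal μ v x * g x)) :
    Integrable g (gaussianReal μ v) := by
  rw [my_gauss_withDensity μ hv,
    integrable_withDensity_iff_integrable_smul
      ((measurable_gaussianPDFReal μ v).real_toNNReal)]
  have : (fun x => ((gaussianPDFReal μ v x).toNNReal : ℝ≥0) • g x) =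
      fun x => gaussianPDFReal μ v x * g x := by
    funext x
    rw [NNReal.smul_def, Real.coe_toNNReal _ (gaussianPDFReal_nonneg μ v x), smul_eq_mul]
  rwa [this]

lemma my_pdf_zero {v : ℝ≥0} (hv : v ≠ 0) :
    gaussianPDFReal 0 v = fun x => (Real.sqrt (2 * π * v))⁻¹ * rexp (-(2 * (v:ℝ))⁻¹ * x ^ 2) := by
  funext x
  have hv' : (0:ℝ) < v := lt_of_le_of_ne v.2 (by exact_mod_cast (Ne.symm hv))
  rw [gaussianPDFReal]
  congr 1
  congr 1
  field_simp
  ring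

section Centered
variable {v : ℝ≥0} (hv : v ≠ 0)

lemma my_vpos (hv : v ≠ 0) : (0:ℝ) < v :=
  lt_of_le_of_ne v.2 (by exact_mod_cast (Ne.symm hv))

lemma my_bpos (hv : v ≠ 0) : (0:ℝ) < (2 * (v:ℝ))⁻¹ := by
  have := my_vpos hv; positivity

lemma my_integrable_id0 : Integrable (fun x : ℝ => x) (gaussianReal 0 v) := by
  by_cases hv : v = 0
  · subst hv; rw [gaussianReal_zero_var]
    exact ⟨measurable_id.aestronglyMeasurable, by simp [HasFiniteIntegral, lintegral_dirac]⟩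
  · refine my_gauss_integrable 0 hv ?_
    rw [my_pdf_zero hv]
    simp_rw [mul_assoc, mul_comm (rexp _)]
    exact ((integrable_mul_exp_neg_mul_sq (my_bpos hv)).const_mul _)

lemma my_integrable_sq0 : Integrable (fun x : ℝ => x ^ 2) (gaussianReal 0 v) := by
  by_cases hv : v = 0
  · subst hv; rw [gaussianReal_zero_var]
    exact ⟨(measurable_id.pow_const 2).aestronglyMeasurable,
      by simp [HasFiniteIntegral, lintegral_dirac]⟩
  · refine my_gauss_integrable 0 hv ?_
    rw [my_pdf_zero hv]
    simp_rw [mul_assoc, mul_comm (rexp _)]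
    exact ((my_integrable_sq_exp (my_bpos hv)).const_mul _)

lemma my_integral_id0 : ∫ x, x ∂(gaussianReal 0 v) = 0 := by
  by_cases hv : v = 0
  · subst hv; simp
  · rw [my_gauss_integral 0 hv, my_pdf_zero hv]
    simp_rw [mul_assoc, mul_comm (rexp _)]
    rw [integral_const_mul, my_int_mul_exp (my_bpos hv), mul_zero]

lemma my_integral_sq0 : ∫ x, x ^ 2 ∂(gaussianReal 0 v) = v := by
  by_cases hv : v = 0
  · subst hv; simp
  · rw [my_gauss_integral 0 hv, my_pdf_zero hv]
    simp_rw [mul_assoc, mul_comm (rexp _)]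
    rw [integral_const_mul, my_int_sq_exp (my_bpos hv)]
    have hvp := my_vpos hv
    have hb : (2 * (v:ℝ))⁻¹ ≠ 0 := ne_of_gt (my_bpos hv)
    rw [show π / (2 * (v:ℝ))⁻¹ = 2 * π * v by field_simp]
    have h2 : (0:ℝ) < 2 * π * v := by positivity
    rw [show (2 * (2 * (v:ℝ))⁻¹)⁻¹ = v by field_simp]
    rw [mul_comm ((v:ℝ)) _, ← mul_assoc,
      show (2:ℝ) * (π * (v:ℝ)) = 2 * π * (v:ℝ) from by ring,
      inv_mul_cancel₀ (ne_of_gt (Real.sqrt_pos.mpr h2)), one_mul]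

end Centered

section General
variable (μ : ℝ) (v : ℝ≥0)

lemma my_gauss_eq_map : gaussianReal μ v = (gaussianReal 0 v).map (· + μ) := by
  rw [gaussianReal_map_add_const, zero_add]

lemma my_emb : MeasurableEmbedding (fun x : ℝ => x + μ) :=
  (Homeomorph.addRight μ).toMeasurableEquiv.measurableEmbedding

lemma my_integral_shift (g : ℝ → ℝ) (hg : Measurable g) :
    ∫ x, g x ∂(gaussianReal μ v) = ∫ x, g (x + μ) ∂(gaussianReal 0 v) := by
  rw [my_gauss_eq_map μ v, (my_emb μ).integral_map]

lemma my_integrable_shift (g : ℝ → ℝ)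
    (h : Integrable (fun x => g (x + μ)) (gaussianReal 0 v)) :
    Integrable g (gaussianReal μ v) := by
  rw [my_gauss_eq_map μ v, (my_emb μ).integrable_map_iff]
  exact h

lemma my_integrable_affine_sq (a b : ℝ) :
    Integrable (fun x : ℝ => (a * x + b) ^ 2) (gaussianReal μ v) := by
  refine my_integrable_shift μ v _ ?_
  have : (fun x : ℝ => (a * (x + μ) + b) ^ 2) =
      fun x : ℝ => a ^ 2 * x ^ 2 + (2 * a * (a * μ + b)) * x + (a * μ + b) ^ 2 := by
    funext x; ring
  rw [this]
  exact ((my_integrable_sq0.const_mul _).add (my_integrable_id0.const_mul _)).add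
    (integrable_const _)

lemma my_integral_affine_sq (a b : ℝ) :
    ∫ x, (a * x + b) ^ 2 ∂(gaussianReal μ v) =
      a ^ 2 * ((v : ℝ) + μ ^ 2) + 2 * a * b * μ + b ^ 2 := by
  rw [my_integral_shift μ v _ (by fun_prop)]
  have : (fun x : ℝ => (a * (x + μ) + b) ^ 2) =
      fun x : ℝ => a ^ 2 * x ^ 2 + (2 * a * (a * μ + b)) * x + (a * μ + b) ^ 2 := by
    funext x; ring
  have h1 : Integrable (fun x : ℝ => a ^ 2 * x ^ 2) (gaussianReal 0 v) :=
    my_integrable_sq0.const_mul _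
  have h2 : Integrable (fun x : ℝ => (2 * a * (a * μ + b)) * x) (gaussianReal 0 v) :=
    my_integrable_id0.const_mul _
  have h12 : Integrable (fun x : ℝ => a ^ 2 * x ^ 2 + (2 * a * (a * μ + b)) * x)
      (gaussianReal 0 v) := h1.add h2
  rw [this, integral_add h12 (integrable_const _), integral_add h1 h2,
    integral_const_mul, integral_const_mul, my_integral_sq0, my_integral_id0, integral_const]
  simp
  ring

end General

lemma my_integrable_div_sub_sq (c m μ : ℝ) (v : ℝ≥0) :
    Integrable (fun x : ℝ => (x / c - m) ^ 2) (gaussianReal μ v) := by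
  have h : (fun x : ℝ => (x / c - m) ^ 2) = fun x : ℝ => ((1 / c) * x + (-m)) ^ 2 := by
    funext x; ring
  rw [h]; exact my_integrable_affine_sq μ v (1 / c) (-m)

lemma my_integral_div_sub_sq (c m μ : ℝ) (v : ℝ≥0) :
    ∫ x, (x / c - m) ^ 2 ∂(gaussianReal μ v) =
      (1 / c) ^ 2 * ((v : ℝ) + μ ^ 2) + 2 * (1 / c) * (-m) * μ + m ^ 2 := by
  have h : (fun x : ℝ => (x / c - m) ^ 2) = fun x : ℝ => ((1 / c) * x + (-m)) ^ 2 := by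
    funext x; ring
  rw [h, my_integral_affine_sq μ v (1 / c) (-m)]; ring

lemma my_integrable_sq' (μ : ℝ) (v : ℝ≥0) :
    Integrable (fun x : ℝ => x ^ 2) (gaussianReal μ v) := by
  have h : (fun x : ℝ => x ^ 2) = fun x : ℝ => ((1:ℝ) * x + 0) ^ 2 := by funext x; ring
  rw [h]; exact my_integrable_affine_sq μ v 1 0

lemma my_integral_sq' (μ : ℝ) (v : ℝ≥0) :
    ∫ x, x ^ 2 ∂(gaussianReal μ v) = (v : ℝ) + μ ^ 2 := by
  have h : (fun x : ℝ => x ^ 2) = fun x : ℝ => ((1:ℝ) * x + 0) ^ 2 := by funext x; ring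
  rw [h, my_integral_affine_sq μ v 1 0]; ring


end SpikeHelpers

open SpikeHelpers

/-- The spike and normal model: joint distribution of `(X, μ)` where `μ = 0` with probability `p`
and `μ ∼ N(μ₀, σ₀²)` otherwise, and `X | μ ∼ N(μ, σ²)`. -/
noncomputable def spikeNormal (p μ₀ σ₀ σ : ℝ) : Measure (ℝ × ℝ) :=
  ENNReal.ofReal p •
      Measure.map (fun x => (x, (0 : ℝ))) (gaussianReal 0 ⟨σ^2, sq_nonneg σ⟩) +
    ENNReal.ofReal (1 - p) •
      Measure.bind (gaussianReal μ₀ ⟨σ₀^2, sq_nonneg σ₀⟩)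
        (fun m => Measure.map (fun x => (x, m)) (gaussianReal m ⟨σ^2, sq_nonneg σ⟩))

lemma my_risk_eq (p μ₀ σ₀ σ : ℝ) (hp : 0 ≤ p) (hp1 : p ≤ 1) (hσ : 0 < σ)
    (lam : ℝ) (hlam : 0 ≤ lam) :
    ∫ z, (z.1 / (1 + lam) - z.2)^2 ∂(spikeNormal p μ₀ σ₀ σ) =
      σ^2 / (1 + lam)^2 + (1 - p) * (μ₀^2 + σ₀^2) * lam^2 / (1 + lam)^2 := by
  have hc : 0 < 1 + lam := by linarith
  set c : ℝ := 1 + lam with hc_def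
  set V : ℝ≥0 := ⟨σ^2, sq_nonneg σ⟩ with hV
  set V₀ : ℝ≥0 := ⟨σ₀^2, sq_nonneg σ₀⟩ with hV₀
  have hVc : (V : ℝ) = σ^2 := rfl
  have hV₀c : (V₀ : ℝ) = σ₀^2 := rfl
  have hf_meas : Measurable fun z : ℝ × ℝ => (z.1 / c - z.2)^2 := by fun_prop
  have hF_meas : Measurable fun z : ℝ × ℝ => ENNReal.ofReal ((z.1 / c - z.2)^2) :=
    ENNReal.measurable_ofReal.comp hf_meas
  -- the kernel is measurable
  have hκ : Measurable fun m : ℝ => Measure.map (fun x : ℝ => (x, m)) (gaussianReal m V) := by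
    apply Measure.measurable_of_measurable_coe
    intro s hs
    have hh : Measurable fun q : ℝ × ℝ => (q.1 + q.2, q.2) := by fun_prop
    have h_eq : (fun m : ℝ => Measure.map (fun x : ℝ => (x, m)) (gaussianReal m V) s) =
        fun m : ℝ =>
          (gaussianReal 0 V) ((fun x : ℝ => (x, m)) ⁻¹'
            ((fun q : ℝ × ℝ => (q.1 + q.2, q.2)) ⁻¹' s)) := by
      funext m
      rw [Measure.map_apply measurable_prodMk_right hs, my_gauss_eq_map m V,
        Measure.map_apply (by fun_prop) (measurable_prodMk_right hs)]
      rfl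
    rw [h_eq]
    exact measurable_measure_prodMk_right (hh hs)
  -- inner integral
  have h_inner : ∀ m : ℝ,
      ∫⁻ z, ENNReal.ofReal ((z.1 / c - z.2)^2)
          ∂(Measure.map (fun x : ℝ => (x, m)) (gaussianReal m V)) =
        ENNReal.ofReal (σ^2 / c^2 + lam^2 / c^2 * m^2) := by
    intro m
    rw [lintegral_map hF_meas measurable_prodMk_right]
    simp only
    rw [← ofReal_integral_eq_lintegral_ofReal (my_integrable_div_sub_sq c m m V)
      (Filter.Eventually.of_forall fun x => sq_nonneg _)]
    congr 1
    rw [my_integral_div_sub_sq c m m V, hVc]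
    field_simp
    ring
  -- spike integral
  have h_spike :
      ∫⁻ z, ENNReal.ofReal ((z.1 / c - z.2)^2)
          ∂(Measure.map (fun x : ℝ => (x, (0:ℝ))) (gaussianReal 0 V)) =
        ENNReal.ofReal (σ^2 / c^2) := by
    rw [lintegral_map hF_meas measurable_prodMk_right]
    simp only
    rw [← ofReal_integral_eq_lintegral_ofReal (my_integrable_div_sub_sq c 0 0 V)
      (Filter.Eventually.of_forall fun x => sq_nonneg _)]
    congr 1
    rw [my_integral_div_sub_sq c 0 0 V, hVc]
    field_simp
    ring
  -- outer integral
  have h_outer :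
      ∫⁻ m, ENNReal.ofReal (σ^2 / c^2 + lam^2 / c^2 * m^2) ∂(gaussianReal μ₀ V₀) =
        ENNReal.ofReal (σ^2 / c^2 + lam^2 / c^2 * (σ₀^2 + μ₀^2)) := by
    have hint : Integrable (fun m : ℝ => σ^2 / c^2 + lam^2 / c^2 * m^2) (gaussianReal μ₀ V₀) :=
      (integrable_const _).add ((my_integrable_sq' μ₀ V₀).const_mul _)
    rw [← ofReal_integral_eq_lintegral_ofReal hint
      (Filter.Eventually.of_forall fun m => by positivity)]
    congr 1
    rw [integral_add (integrable_const _) ((my_integrable_sq' μ₀ V₀).const_mul _),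
      integral_const, integral_const_mul, my_integral_sq' μ₀ V₀, hV₀c]
    simp
  -- put it together
  rw [integral_eq_lintegral_of_nonneg_ae
      (Filter.Eventually.of_forall fun z => sq_nonneg _) hf_meas.aestronglyMeasurable]
  unfold spikeNormal
  rw [lintegral_add_measure, lintegral_smul_measure, lintegral_smul_measure, ← hV, ← hV₀,
    h_spike, Measure.lintegral_bind hκ.aemeasurable hF_meas.aemeasurable]
  simp_rw [h_inner]
  have hA : (0:ℝ) ≤ p * (σ^2 / c^2) := mul_nonneg hp (by positivity)
  have hB : (0:ℝ) ≤ (1 - p) * (σ^2 / c^2 + lam^2 / c^2 * (σ₀^2 + μ₀^2)) :=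
    mul_nonneg (by linarith) (by positivity)
  rw [h_outer, smul_eq_mul, smul_eq_mul, ← ENNReal.ofReal_mul hp, ← ENNReal.ofReal_mul (by linarith : (0:ℝ) ≤ 1 - p),
    ← ENNReal.ofReal_add hA hB, ENNReal.toReal_ofReal (add_nonneg hA hB)]
  field_simp
  ring


/-- In the spike and normal model, the integrated risk of ridge is
`R(λ) = σ²/(1+λ)² + (1−p)(μ₀² + σ₀²) λ²/(1+λ)²`, minimized over `λ ≥ 0` at
`λ* = σ²/((1−p)(μ₀² + σ₀²))`, provided `(1−p)(μ₀²+σ₀²) > 0`. -/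
theorem spike_normal_ridge_risk (p μ₀ σ₀ σ : ℝ) (hp : 0 ≤ p) (hp1 : p < 1)
    (hσ : 0 < σ) (hσ₀ : 0 ≤ σ₀) (hpos : 0 < (1 - p) * (μ₀^2 + σ₀^2)) :
    (∀ lam : ℝ, 0 ≤ lam →
      ∫ z, (z.1 / (1 + lam) - z.2)^2 ∂(spikeNormal p μ₀ σ₀ σ) =
        σ^2 / (1 + lam)^2 + (1 - p) * (μ₀^2 + σ₀^2) * lam^2 / (1 + lam)^2) ∧
    (∀ lam : ℝ, 0 ≤ lam →
      ∫ z, (z.1 / (1 + σ^2 / ((1 - p) * (μ₀^2 + σ₀^2))) - z.2)^2 ∂(spikeNormal p μ₀ σ₀ σ) ≤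
        ∫ z, (z.1 / (1 + lam) - z.2)^2 ∂(spikeNormal p μ₀ σ₀ σ)) := by
  refine ⟨fun lam hlam => my_risk_eq p μ₀ σ₀ σ hp hp1.le hσ lam hlam, fun lam hlam => ?_⟩
  set K := (1 - p) * (μ₀^2 + σ₀^2) with hK_def
  have hK : 0 < K := hpos
  have ht : 0 ≤ σ^2 / K := by positivity
  rw [my_risk_eq p μ₀ σ₀ σ hp hp1.le hσ _ ht, my_risk_eq p μ₀ σ₀ σ hp hp1.le hσ lam hlam,
    ← hK_def]
  have hc : 0 < 1 + lam := by linarith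
  have hσK : 0 < σ^2 + K := by positivity
  have h1K : 0 < 1 + σ^2 / K := by positivity
  have e1 : σ^2 / (1 + σ^2/K)^2 + K * (σ^2/K)^2 / (1 + σ^2/K)^2 = σ^2 * K / (σ^2 + K) := by
    field_simp
    ring
  have e2 : σ^2 * K / (σ^2 + K) ≤ (σ^2 + K * lam^2) / (1 + lam)^2 := by
    rw [div_le_div_iff₀ hσK (by positivity)]
    nlinarith [sq_nonneg (σ^2 - K * lam)]
  have e3 : (σ^2 + K * lam^2) / (1 + lam)^2 = σ^2/(1+lam)^2 + K * lam^2/(1+lam)^2 := by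
    ring
  linarith
end

section
/- Uniform loss consistency via risk estimation: suppose sup_{λ} |L_n(λ) − R̄_π(λ)| → 0 in probability uniformly over π ∈ Q, and there exist functions r̄_π(λ), v̄_π, and data-dependent r_n(λ) with R̄_π(λ) = r̄_π(λ) + v̄_π and sup_λ |r_n(λ) − r̄_π(λ)| → 0 in probability uniformly over π ∈ Q. Then for λ̂_n = argmin_λ r_n(λ), |L_n(λ̂_n) − inf_λ L_n(λ)| → 0 in probability uniformly over π ∈ Q. -/
open MeasureTheory Filter

/-- Uniform loss consistency via risk estimation (Theorem 2).  `Q` indexes the data generating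
processes `π`, with associated probability measures `P π` on a sample space `Ω`.  `L n lam` is the
compound loss, `Rbar π lam` the integrated risk, `r n lam` the empirical risk criterion with
population counterpart `rbar π lam` satisfying `Rbar π lam = rbar π lam + vbar π`, and
`lamhat n ω` minimizes `r n · ω`.  If `sup_λ |L_n(λ) − R̄_π(λ)| → 0` and
`sup_λ |r_n(λ) − r̄_π(λ)| → 0` in probability uniformly over `π ∈ Q`, then
`|L_n(λ̂_n) − inf_λ L_n(λ)| → 0` in probability uniformly over `π ∈ Q`. -/
theorem uniform_loss_consistency {Ω : Type*} [MeasurableSpace Ω] {Q : Type*}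
    (P : Q → Measure Ω) (hP : ∀ π, IsProbabilityMeasure (P π))
    (L : ℕ → ENNReal → Ω → ℝ) (hLnonneg : ∀ n lam ω, 0 ≤ L n lam ω)
    (Rbar : Q → ENNReal → ℝ)
    (r : ℕ → ENNReal → Ω → ℝ) (rbar : Q → ENNReal → ℝ) (vbar : Q → ℝ)
    (hdecomp : ∀ π lam, Rbar π lam = rbar π lam + vbar π)
    (lamhat : ℕ → Ω → ENNReal)
    (hmin : ∀ n ω lam, r n (lamhat n ω) ω ≤ r n lam ω)
    (h1 : ∀ ε > (0 : ℝ), Tendsto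
      (fun n => ⨆ π, P π {ω | ∃ lam, ε < |L n lam ω - Rbar π lam|}) atTop (nhds 0))
    (h2 : ∀ ε > (0 : ℝ), Tendsto
      (fun n => ⨆ π, P π {ω | ∃ lam, ε < |r n lam ω - rbar π lam|}) atTop (nhds 0)) :
    ∀ ε > (0 : ℝ), Tendsto
      (fun n => ⨆ π, P π {ω | ε < |L n (lamhat n ω) ω - ⨅ lam, L n lam ω|}) atTop (nhds 0) := by
  intro ε hε
  have hε4 : (0:ℝ) < ε/4 := by linarith
  have key : ∀ n, (⨆ π, P π {ω | ε < |L n (lamhat n ω) ω - ⨅ lam, L n lam ω|}) ≤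
      (⨆ π, P π {ω | ∃ lam, ε/4 < |L n lam ω - Rbar π lam|}) +
      (⨆ π, P π {ω | ∃ lam, ε/4 < |r n lam ω - rbar π lam|}) := by
    intro n
    refine iSup_le fun π => ?_
    have hsub : {ω | ε < |L n (lamhat n ω) ω - ⨅ lam, L n lam ω|} ⊆
        {ω | ∃ lam, ε/4 < |L n lam ω - Rbar π lam|} ∪
        {ω | ∃ lam, ε/4 < |r n lam ω - rbar π lam|} := by
      intro ω hω
      simp only [Set.mem_setOf_eq, Set.mem_union]
      by_contra hc
      push_neg at hc
      obtain ⟨hL, hr⟩ := hc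
      simp only [Set.mem_setOf_eq] at hω
      refine absurd hω (not_lt.2 ?_)
      have hbdd : BddBelow (Set.range fun lam => L n lam ω) := by
        refine ⟨0, ?_⟩
        rintro x ⟨lam, rfl⟩
        exact hLnonneg n lam ω
      have hA_le : (⨅ lam, L n lam ω) ≤ L n (lamhat n ω) ω := ciInf_le hbdd _
      have hub : ∀ lam, L n (lamhat n ω) ω ≤ L n lam ω + ε := by
        intro lam
        have e1 := abs_le.1 (hL (lamhat n ω))
        have e2 := abs_le.1 (hr (lamhat n ω))
        have e3 := abs_le.1 (hL lam)
        have e4 := abs_le.1 (hr lam)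
        have hm := hmin n ω lam
        have hd1 := hdecomp π (lamhat n ω)
        have hd2 := hdecomp π lam
        linarith
      have hlb : L n (lamhat n ω) ω - ε ≤ ⨅ lam, L n lam ω :=
        le_ciInf fun lam => by linarith [hub lam]
      rw [abs_le]
      constructor <;> linarith
    calc P π {ω | ε < |L n (lamhat n ω) ω - ⨅ lam, L n lam ω|}
        ≤ P π ({ω | ∃ lam, ε/4 < |L n lam ω - Rbar π lam|} ∪
            {ω | ∃ lam, ε/4 < |r n lam ω - rbar π lam|}) := measure_mono hsub
      _ ≤ P π {ω | ∃ lam, ε/4 < |L n lam ω - Rbar π lam|} +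
            P π {ω | ∃ lam, ε/4 < |r n lam ω - rbar π lam|} := measure_union_le _ _
      _ ≤ _ := add_le_add (le_iSup (fun π => P π {ω | ∃ lam, ε/4 < |L n lam ω - Rbar π lam|}) π)
            (le_iSup (fun π => P π {ω | ∃ lam, ε/4 < |r n lam ω - rbar π lam|}) π)
  have hsum : Tendsto (fun n =>
      (⨆ π, P π {ω | ∃ lam, ε/4 < |L n lam ω - Rbar π lam|}) +
      (⨆ π, P π {ω | ∃ lam, ε/4 < |r n lam ω - rbar π lam|})) atTop (nhds 0) := by
    have := (h1 (ε/4) hε4).add (h2 (ε/4) hε4)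
    simpa using this
  exact tendsto_of_tendsto_of_tendsto_of_le_of_le tendsto_const_nhds hsum
    (fun n => zero_le) key
end
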